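/- For d > n ≥ 2, the number L of tuples (v_0,...,v_n) ∈ (S^{d−1})^{n+1} such that for some 1 ≤ i ≤ n, v_i − v_0 lies in the set {Σ_{j≠i} a_j (v_j − v_0) : all a_j ∈ F_q^*} satisfies L ≪ |S^{d−1}|^{n+1}/q^2, i.e., L ≤ C(n) q^{(d−1)(n+1)−2} for an absolute constant C(n). -/

import Mathlib

/-- The unit sphere `S^{d-1}` in `F^d`. -/
def sphereFin (F : Type*) [CommRing F] [Fintype F] [DecidableEq F] (d : ℕ) :
    Finset (Fin d → F) :=
  Finset.univ.filter (fun x => ∑ i, (x i) ^ 2 = 1)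

open Finset

lemma mem_sphereFin {F : Type} [Field F] [Fintype F] [DecidableEq F] {d : ℕ}
    {x : Fin d → F} : x ∈ sphereFin F d ↔ ∑ i, (x i) ^ 2 = 1 := by
  simp [sphereFin]

/-! ### Index sets -/

def Jset (n : ℕ) (i : Fin (n+1)) : Finset (Fin (n+1)) := (Finset.univ.erase 0).erase i

lemma mem_Jset {n : ℕ} {i j : Fin (n+1)} : j ∈ Jset n i ↔ j ≠ i ∧ j ≠ 0 := by
  simp [Jset, Finset.mem_erase]

lemma card_Jset {n : ℕ} {i : Fin (n+1)} (hi : i ≠ 0) : (Jset n i).card = n - 1 := by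
  rw [Jset, Finset.card_erase_of_mem, Finset.card_erase_of_mem (Finset.mem_univ _),
    Finset.card_univ, Fintype.card_fin]
  · omega
  · exact Finset.mem_erase.mpr ⟨hi, Finset.mem_univ _⟩

lemma Jset_nonempty {n : ℕ} (hn : 2 ≤ n) {i : Fin (n+1)} (hi : i ≠ 0) :
    (Jset n i).Nonempty := by
  rw [← Finset.card_pos, card_Jset hi]; omega

lemma card_piFinset_ite {α β : Type} [Fintype α] [DecidableEq α] [DecidableEq β]
    (J : Finset α) (s : Finset β) (b : β) :
    (Fintype.piFinset (fun j => if j ∈ J then s else ({b} : Finset β))).card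
      = s.card ^ J.card := by
  rw [Fintype.card_piFinset]
  calc ∏ j, (if j ∈ J then s else ({b} : Finset β)).card
      = ∏ j, (if j ∈ J then s.card else 1) := by
        refine Finset.prod_congr rfl fun j _ => ?_
        split_ifs <;> simp
    _ = ∏ j ∈ Finset.univ.filter (· ∈ J), s.card := by rw [Finset.prod_filter]
    _ = s.card ^ J.card := by
        rw [Finset.prod_const]
        congr 1
        rw [Finset.filter_mem_eq_inter, Finset.univ_inter]

section Aux

variable {n d : ℕ} {F : Type} [Field F] [Fintype F] [DecidableEq F]

def Aset (n : ℕ) (F : Type) [Field F] [Fintype F] [DecidableEq F] (i : Fin (n+1)) :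
    Finset (Fin (n+1) → F) :=
  Fintype.piFinset (fun j => if j ∈ Jset n i then Finset.univ.erase 0 else {0})

def Wset (n : ℕ) (F : Type) [Field F] [Fintype F] [DecidableEq F] (d : ℕ) (i : Fin (n+1)) :
    Finset (Fin (n+1) → (Fin d → F)) :=
  Fintype.piFinset (fun j => if j ∈ Jset n i then sphereFin F d else {0})

def lamA (n : ℕ) {F : Type} [Field F] (i : Fin (n+1)) (a : Fin (n+1) → F) : F :=
  1 - ∑ j ∈ Jset n i, a j

def uuA (n : ℕ) {F : Type} [Field F] (d : ℕ) (i : Fin (n+1)) (a : Fin (n+1) → F)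
    (h : Fin (n+1) → (Fin d → F)) : Fin d → F :=
  ∑ j ∈ Jset n i, a j • h j

def Kset (n : ℕ) {F : Type} [Field F] [Fintype F] [DecidableEq F] (d : ℕ) (i : Fin (n+1))
    (a : Fin (n+1) → F) (h : Fin (n+1) → (Fin d → F)) : Finset (Fin d → F) :=
  (sphereFin F d).filter (fun x => lamA n i a • x + uuA n d i a h ∈ sphereFin F d)

def Tia (n : ℕ) {F : Type} [Field F] [Fintype F] [DecidableEq F] (d : ℕ) (i : Fin (n+1))
    (a : Fin (n+1) → F) : Finset (Fin (n+1) → (Fin d → F)) :=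
  Finset.univ.filter (fun v => (∀ j, v j ∈ sphereFin F d) ∧
    v i - v 0 = ∑ j ∈ Jset n i, a j • (v j - v 0))

set_option linter.unusedSectionVars false

lemma key_eq (i : Fin (n+1)) (a : Fin (n+1) → F) (v : Fin (n+1) → (Fin d → F))
    (hv : v i - v 0 = ∑ j ∈ Jset n i, a j • (v j - v 0)) :
    lamA n i a • v 0 + uuA n d i a (fun j => if j ∈ Jset n i then v j else 0) = v i := by
  have h1 : uuA n d i a (fun j => if j ∈ Jset n i then v j else 0)
      = ∑ j ∈ Jset n i, a j • v j := by
    refine Finset.sum_congr rfl fun j hj => by simp [hj]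
  have h2 : ∑ j ∈ Jset n i, a j • (v j - v 0)
      = (∑ j ∈ Jset n i, a j • v j) - (∑ j ∈ Jset n i, a j) • v 0 := by
    rw [Finset.sum_smul]
    rw [← Finset.sum_sub_distrib]
    exact Finset.sum_congr rfl fun j _ => smul_sub _ _ _
  rw [h1, lamA, sub_smul, one_smul]
  rw [h2] at hv
  have := sub_eq_iff_eq_add.mp hv
  rw [this]; abel

lemma step2 (i : Fin (n+1)) (a : Fin (n+1) → F) :
    (Tia n d i a).card ≤ ∑ h ∈ Wset n F d i, (Kset n d i a h).card := by
  classical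
  rw [← Finset.card_sigma]
  apply Finset.card_le_card_of_injOn
    (fun v => (⟨fun j => if j ∈ Jset n i then v j else 0, v 0⟩ :
      Σ _h : Fin (n+1) → (Fin d → F), (Fin d → F)))
  · intro v hv
    rw [Finset.mem_coe, Tia, Finset.mem_filter] at hv
    obtain ⟨-, hvS, hveq⟩ := hv
    rw [Finset.mem_coe, Finset.mem_sigma]
    constructor
    · rw [Wset, Fintype.mem_piFinset]
      intro j
      by_cases hj : j ∈ Jset n i <;> simp [hj, hvS j]
    · rw [Kset, Finset.mem_filter]
      refine ⟨hvS 0, ?_⟩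
      rw [key_eq i a v hveq]
      exact hvS i
  · intro v hv w hw heq
    simp only [Tia, Finset.mem_coe, Finset.mem_filter] at hv hw
    obtain ⟨-, hvS, hveq⟩ := hv
    obtain ⟨-, hwS, hweq⟩ := hw
    simp only [Sigma.mk.inj_iff, heq_eq_eq] at heq
    obtain ⟨hproj, h0⟩ := heq
    funext j
    by_cases hj : j ∈ Jset n i
    · have := congrFun hproj j
      rwa [if_pos hj, if_pos hj] at this
    · rcases mem_Jset.not.mp hj with hj'
      push_neg at hj'
      by_cases hji : j = i
      · subst hji
        rw [← key_eq j a v hveq, ← key_eq j a w hweq, hproj, h0]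
      · rw [hj' hji]
        exact h0

lemma card_Wset {i : Fin (n+1)} (hi : i ≠ 0) :
    (Wset n F d i).card = (sphereFin F d).card ^ (n - 1) := by
  rw [Wset, card_piFinset_ite, card_Jset hi]

lemma card_Aset {i : Fin (n+1)} (hi : i ≠ 0) :
    (Aset n F i).card = (Fintype.card F - 1) ^ (n - 1) := by
  rw [Aset, card_piFinset_ite, card_Jset hi, Finset.card_erase_of_mem (Finset.mem_univ _),
    Finset.card_univ]

lemma aj_ne_zero {i : Fin (n+1)} {a : Fin (n+1) → F} (ha : a ∈ Aset n F i)
    {j : Fin (n+1)} (hj : j ∈ Jset n i) : a j ≠ 0 := by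
  rw [Aset, Fintype.mem_piFinset] at ha
  have := ha j
  rw [if_pos hj] at this
  exact (Finset.mem_erase.mp this).1

lemma count_u_zero (hn : 2 ≤ n) {i : Fin (n+1)} (hi : i ≠ 0) {a : Fin (n+1) → F}
    (ha : a ∈ Aset n F i) :
    ((Wset n F d i).filter (fun h => uuA n d i a h = 0)).card
      ≤ (sphereFin F d).card ^ (n - 2) := by
  classical
  obtain ⟨j0, hj0⟩ := Jset_nonempty hn hi
  have hcard : (Fintype.piFinset (fun j => if j ∈ (Jset n i).erase j0
      then sphereFin F d else ({0} : Finset (Fin d → F)))).card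
      = (sphereFin F d).card ^ (n - 2) := by
    rw [card_piFinset_ite, Finset.card_erase_of_mem hj0, card_Jset hi]
    congr 1
  rw [← hcard]
  apply Finset.card_le_card_of_injOn (fun h => Function.update h j0 0)
  · intro h hh
    rw [Finset.mem_coe, Finset.mem_filter] at hh
    obtain ⟨hhW, -⟩ := hh
    rw [Wset, Fintype.mem_piFinset] at hhW
    rw [Finset.mem_coe, Fintype.mem_piFinset]
    intro j
    beta_reduce
    by_cases hjj : j = j0
    · subst hjj
      rw [Function.update_self, if_neg (Finset.notMem_erase _ _)]
      exact Finset.mem_singleton_self 0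
    · rw [Function.update_of_ne hjj]
      have hmem : (j ∈ (Jset n i).erase j0) ↔ (j ∈ Jset n i) := by
        rw [Finset.mem_erase]; tauto
      by_cases hj : j ∈ Jset n i
      · rw [if_pos (hmem.mpr hj)]
        have := hhW j; rwa [if_pos hj] at this
      · rw [if_neg (fun hc => hj (hmem.mp hc))]
        have := hhW j; rwa [if_neg hj] at this
  · intro h hh h' hh' heq
    simp only [Finset.mem_coe, Finset.mem_filter] at hh hh'
    obtain ⟨-, hu⟩ := hh
    obtain ⟨-, hu'⟩ := hh'
    have hne : ∀ j, j ≠ j0 → h j = h' j := by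
      intro j hj
      have := congrFun heq j
      simpa [Function.update_of_ne hj] using this
    have hrec : ∀ g : Fin (n+1) → (Fin d → F), uuA n d i a g = 0 →
        a j0 • g j0 = - ∑ j ∈ (Jset n i).erase j0, a j • g j := by
      intro g hg
      have h1 := Finset.add_sum_erase (Jset n i) (fun j => a j • g j) hj0
      rw [uuA] at hg
      rw [hg] at h1
      exact eq_neg_of_add_eq_zero_left h1
    have hsum : ∑ j ∈ (Jset n i).erase j0, a j • h j
        = ∑ j ∈ (Jset n i).erase j0, a j • h' j := by
      refine Finset.sum_congr rfl fun j hj => ?_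
      rw [hne j (Finset.mem_erase.mp hj).1]
    have hsmul : a j0 • h j0 = a j0 • h' j0 := by
      rw [hrec h hu, hrec h' hu', hsum]
    have hj0ne := aj_ne_zero ha hj0
    funext j
    by_cases hjj : j = j0
    · subst hjj
      exact smul_right_injective _ hj0ne hsmul
    · exact hne j hjj

lemma count_lam_zero (hn : 2 ≤ n) {i : Fin (n+1)} (hi : i ≠ 0) :
    ((Aset n F i).filter (fun a => lamA n i a = 0)).card
      ≤ Fintype.card F ^ (n - 2) := by
  classical
  obtain ⟨j0, hj0⟩ := Jset_nonempty hn hi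
  have hcard : (Fintype.piFinset (fun j => if j ∈ (Jset n i).erase j0
      then (Finset.univ : Finset F) else ({0} : Finset F))).card
      = Fintype.card F ^ (n - 2) := by
    rw [card_piFinset_ite, Finset.card_erase_of_mem hj0, card_Jset hi, Finset.card_univ]
    congr 1
  calc ((Aset n F i).filter (fun a => lamA n i a = 0)).card
      ≤ (Fintype.piFinset (fun j => if j ∈ (Jset n i).erase j0
          then (Finset.univ : Finset F) else ({0} : Finset F))).card := by
        apply Finset.card_le_card_of_injOn (fun a => Function.update a j0 0)
        · intro a hha
          rw [Finset.mem_coe, Finset.mem_filter] at hha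
          obtain ⟨haA, -⟩ := hha
          rw [Aset, Fintype.mem_piFinset] at haA
          rw [Finset.mem_coe, Fintype.mem_piFinset]
          intro j
          beta_reduce
          by_cases hjj : j = j0
          · subst hjj
            rw [Function.update_self, if_neg (Finset.notMem_erase _ _)]
            exact Finset.mem_singleton_self 0
          · rw [Function.update_of_ne hjj]
            by_cases hj : j ∈ (Jset n i).erase j0
            · rw [if_pos hj]; exact Finset.mem_univ _
            · have hjJ : j ∉ Jset n i := by
                intro hc; exact hj (Finset.mem_erase.mpr ⟨hjj, hc⟩)
              rw [if_neg hj]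
              have := haA j; rwa [if_neg hjJ] at this
        · intro a ha a' ha' heq
          simp only [Finset.mem_coe, Finset.mem_filter] at ha ha'
          obtain ⟨-, hl⟩ := ha
          obtain ⟨-, hl'⟩ := ha'
          have hne : ∀ j, j ≠ j0 → a j = a' j := by
            intro j hj
            have := congrFun heq j
            simpa [Function.update_of_ne hj] using this
          have hrec : ∀ b : Fin (n+1) → F, lamA n i b = 0 →
              b j0 = 1 - ∑ j ∈ (Jset n i).erase j0, b j := by
            intro b hb
            rw [lamA, sub_eq_zero] at hb
            have h1 := Finset.add_sum_erase (Jset n i) b hj0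
            rw [← hb] at h1
            linear_combination h1
          have hsum : ∑ j ∈ (Jset n i).erase j0, a j
              = ∑ j ∈ (Jset n i).erase j0, a' j := by
            refine Finset.sum_congr rfl fun j hj => hne j (Finset.mem_erase.mp hj).1
          funext j
          by_cases hjj : j = j0
          · subst hjj
            rw [hrec a hl, hrec a' hl', hsum]
          · exact hne j hjj
    _ = Fintype.card F ^ (n - 2) := hcard

end Aux

lemma kset_subset_hyperplane {F : Type} [Field F] [Fintype F] [DecidableEq F] {d : ℕ}
    (lam : F) (u : Fin d → F) :
    ((sphereFin F d).filter (fun x => lam • x + u ∈ sphereFin F d)) ⊆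
      ((sphereFin F d).filter (fun x =>
        ∑ k, x k * ((2 * lam) • u) k = 1 - lam ^ 2 - ∑ k, (u k) ^ 2)) := by
  intro x hx
  rw [Finset.mem_filter] at hx ⊢
  obtain ⟨hxS, hxK⟩ := hx
  refine ⟨hxS, ?_⟩
  have hx1 : ∑ k, (x k) ^ 2 = 1 := mem_sphereFin.mp hxS
  have hx2 : ∑ k, (lam * x k + u k) ^ 2 = 1 := by
    have := mem_sphereFin.mp hxK
    simpa [Pi.add_apply, Pi.smul_apply, smul_eq_mul] using this
  have expand : ∑ k, (lam * x k + u k) ^ 2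
      = lam ^ 2 * (∑ k, (x k) ^ 2) + (∑ k, x k * (2 * lam * u k)) + ∑ k, (u k) ^ 2 := by
    rw [Finset.mul_sum, ← Finset.sum_add_distrib, ← Finset.sum_add_distrib]
    exact Finset.sum_congr rfl fun k _ => by ring
  have goal : ∑ k, x k * (2 * lam * u k) = 1 - lam ^ 2 - ∑ k, (u k) ^ 2 := by
    linear_combination hx2 - expand - lam ^ 2 * hx1
  simpa [Pi.smul_apply, smul_eq_mul] using goal

lemma hyperplane_bound (F : Type) [Field F] [Fintype F] [DecidableEq F]
    (d : ℕ) (χ : AddChar F ℂ) (hχ : χ ≠ 1) (Cf : ℝ) (hCf : 0 ≤ Cf)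
    (hF : ∀ m : Fin d → F, m ≠ 0 →
        ‖∑ x ∈ sphereFin F d, χ (∑ i, x i * m i)‖ ≤
          Cf * (Fintype.card F : ℝ) ^ (((d : ℝ) - 1) / 2))
    (m : Fin d → F) (hm : m ≠ 0) (c : F) :
    (((sphereFin F d).filter (fun x => ∑ i, x i * m i = c)).card : ℝ) ≤
      ((sphereFin F d).card : ℝ) / (Fintype.card F) +
        Cf * (Fintype.card F : ℝ) ^ (((d : ℝ) - 1) / 2) := by
  classical
  set S := sphereFin F d with hSdef
  set q := Fintype.card F with hq
  have hq0 : 0 < (q : ℝ) := by exact_mod_cast Fintype.card_pos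
  set N := (S.filter (fun x => ∑ i, x i * m i = c)).card with hN
  set P : ℝ := Cf * (q : ℝ) ^ (((d : ℝ) - 1) / 2) with hP
  have hP0 : 0 ≤ P := mul_nonneg hCf (Real.rpow_nonneg (le_of_lt hq0) _)
  have key : (N : ℂ) * q = ∑ t : F, ∑ x ∈ S, χ (((∑ i, x i * m i) - c) * t) := by
    rw [Finset.sum_comm]
    have h1 : ∀ x ∈ S, ∑ t : F, χ (((∑ i, x i * m i) - c) * t)
        = if (∑ i, x i * m i) = c then (q : ℂ) else 0 := by
      intro x _
      have h := AddChar.sum_mulShift (R := F) ((∑ i, x i * m i) - c)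
        (AddChar.IsPrimitive.of_ne_one hχ)
      calc ∑ t : F, χ (((∑ i, x i * m i) - c) * t)
          = ∑ t : F, χ (t * ((∑ i, x i * m i) - c)) :=
            Finset.sum_congr rfl fun t _ => by rw [mul_comm _ t]
        _ = if (∑ i, x i * m i) = c then (q : ℂ) else 0 := by
            rw [h]
            by_cases hc : (∑ i, x i * m i) = c <;> simp [hc, sub_eq_zero, hq]
    rw [Finset.sum_congr rfl h1, Finset.sum_ite, Finset.sum_const_zero, add_zero,
      Finset.sum_const, nsmul_eq_mul]
  have h2 : ‖(N : ℂ) * q‖ = (N : ℝ) * q := by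
    rw [norm_mul, Complex.norm_natCast, Complex.norm_natCast]
  have h4 : ∀ t ∈ (Finset.univ.erase (0 : F)),
      ‖∑ x ∈ S, χ (((∑ i, x i * m i) - c) * t)‖ ≤ P := by
    intro t ht
    have ht0 : t ≠ 0 := (Finset.mem_erase.1 ht).1
    have hsplit : ∀ x : Fin d → F,
        χ (((∑ i, x i * m i) - c) * t) = χ (∑ i, x i * (t • m) i) * χ (-c * t) := by
      intro x
      rw [← AddChar.map_add_eq_mul]
      congr 1
      have h5 : ∑ i, x i * (t • m) i = (∑ i, x i * m i) * t := by
        rw [Finset.sum_mul]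
        exact Finset.sum_congr rfl fun i _ => by simp only [Pi.smul_apply, smul_eq_mul]; ring
      rw [h5]; ring
    have h6 : (∑ x ∈ S, χ (((∑ i, x i * m i) - c) * t))
        = (∑ x ∈ S, χ (∑ i, x i * (t • m) i)) * χ (-c * t) := by
      rw [Finset.sum_mul]
      exact Finset.sum_congr rfl fun x _ => hsplit x
    rw [h6, norm_mul]
    have h7 : ‖χ (-c * t)‖ = 1 := by
      rw [AddChar.norm_apply]
    rw [h7, mul_one]
    exact hF (t • m) (smul_ne_zero ht0 hm)
  have h3 : ‖∑ t : F, ∑ x ∈ S, χ (((∑ i, x i * m i) - c) * t)‖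
      ≤ (S.card : ℝ) + (q : ℝ) * P := by
    calc ‖∑ t : F, ∑ x ∈ S, χ (((∑ i, x i * m i) - c) * t)‖
        ≤ ∑ t : F, ‖∑ x ∈ S, χ (((∑ i, x i * m i) - c) * t)‖ :=
          norm_sum_le _ _
      _ = ‖∑ x ∈ S, χ (((∑ i, x i * m i) - c) * 0)‖
          + ∑ t ∈ Finset.univ.erase (0 : F),
              ‖∑ x ∈ S, χ (((∑ i, x i * m i) - c) * t)‖ := by
          exact (Finset.add_sum_erase Finset.univ _ (Finset.mem_univ (0 : F))).symm
      _ ≤ (S.card : ℝ) + (q : ℝ) * P := by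
          have ht0 : ‖∑ x ∈ S, χ (((∑ i, x i * m i) - c) * 0)‖ = (S.card : ℝ) := by
            simp
          rw [ht0]
          refine add_le_add le_rfl ?_
          calc ∑ t ∈ Finset.univ.erase (0 : F),
              ‖∑ x ∈ S, χ (((∑ i, x i * m i) - c) * t)‖
              ≤ ∑ _t ∈ Finset.univ.erase (0 : F), P := Finset.sum_le_sum h4
            _ = ((Finset.univ.erase (0 : F)).card : ℝ) * P := by
                rw [Finset.sum_const, nsmul_eq_mul]
            _ ≤ (q : ℝ) * P := by
                refine mul_le_mul_of_nonneg_right ?_ hP0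
                exact_mod_cast Finset.card_le_card (Finset.subset_univ _)
  rw [← key, h2] at h3
  have h8 : (N : ℝ) ≤ ((S.card : ℝ) + (q : ℝ) * P) / q := by
    rw [le_div_iff₀ hq0]; exact h3
  refine h8.trans ?_
  rw [add_div, mul_comm (q : ℝ) P, mul_div_assoc, div_self (ne_of_gt hq0), mul_one]

lemma char2_q_le {F : Type} [Field F] [Fintype F] [DecidableEq F] {e : ℕ} (he2 : 2 ≤ e)
    (hchar : ringChar F = 2) (χ : AddChar F ℂ) {Cf : ℝ}
    (hF : ∀ m : Fin (e+1) → F, m ≠ 0 →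
        ‖∑ x ∈ sphereFin F (e+1), χ (∑ i, x i * m i)‖ ≤
          Cf * (Fintype.card F : ℝ) ^ ((((e+1 : ℕ) : ℝ) - 1) / 2)) :
    ((Fintype.card F : ℕ) : ℝ) ≤ Cf := by
  haveI : Fact (Nat.Prime 2) := ⟨Nat.prime_two⟩
  haveI hp : CharP F 2 := by rw [← hchar]; exact ringChar.charP F
  set q := Fintype.card F with hq
  set Q := (q : ℝ) with hQ
  have hq2 : 1 < q := Fintype.one_lt_card
  have hQ1 : (1 : ℝ) ≤ Q := by rw [hQ]; exact_mod_cast hq2.le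
  have hQpos : (0 : ℝ) < Q := lt_of_lt_of_le one_pos hQ1
  have hsum1 : ∀ x ∈ sphereFin F (e+1), ∑ i, x i = 1 := by
    intro x hx
    have h1 : (∑ i, x i) ^ 2 = 1 := by
      rw [sum_pow_char]; exact mem_sphereFin.mp hx
    have h2 : (∑ i, x i - 1) * (∑ i, x i + 1) = 0 := by linear_combination h1
    rcases mul_eq_zero.mp h2 with h | h
    · exact sub_eq_zero.mp h
    · have h3 : ∑ i, x i = -1 := eq_neg_of_add_eq_zero_left h
      rw [h3, CharTwo.neg_eq]
  have hinj : q ^ e ≤ (sphereFin F (e+1)).card := by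
    have hm : ∀ y : Fin e → F,
        (Fin.cons (1 - ∑ j, y j) y : Fin (e+1) → F) ∈ sphereFin F (e+1) := by
      intro y
      rw [mem_sphereFin, ← sum_pow_char, Fin.sum_cons]
      simp
    have := Finset.card_le_card_of_injOn (s := (Finset.univ : Finset (Fin e → F)))
      (f := fun y : Fin e → F => (Fin.cons (1 - ∑ j, y j) y : Fin (e+1) → F))
      (fun y _ => hm y)
      (fun y _ y' _ hxy => by
        have := congrArg Fin.tail hxy
        simpa [Fin.tail_cons] using this)
    simpa [Finset.card_univ, Fintype.card_fun] using this
  have hones : (fun _ : Fin (e+1) => (1 : F)) ≠ 0 := by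
    intro h
    have := congrFun h 0
    simp at this
  have habs : ‖∑ x ∈ sphereFin F (e+1),
        χ (∑ i, x i * (fun _ : Fin (e+1) => (1:F)) i)‖
      = ((sphereFin F (e+1)).card : ℝ) := by
    have h5 : ∀ x ∈ sphereFin F (e+1),
        χ (∑ i, x i * (fun _ : Fin (e+1) => (1:F)) i) = χ 1 := by
      intro x hx
      congr 1
      simp only [mul_one]
      exact hsum1 x hx
    rw [Finset.sum_congr rfl h5, Finset.sum_const, nsmul_eq_mul, norm_mul,
      Complex.norm_natCast, AddChar.norm_apply, mul_one]
  have hub := hF (fun _ => 1) hones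
  rw [habs] at hub
  have hexp : ((((e+1 : ℕ)) : ℝ) - 1) / 2 = (e : ℝ) / 2 := by push_cast; ring
  rw [hexp] at hub
  have hQe : Q ^ (e : ℕ) = Q ^ ((e : ℝ)/2) * Q ^ ((e : ℝ)/2) := by
    rw [← Real.rpow_add hQpos, ← Real.rpow_natCast Q e]
    norm_num
  have hX0 : (0 : ℝ) < Q ^ ((e : ℝ)/2) := Real.rpow_pos_of_pos hQpos _
  have hXCf : Q ^ ((e : ℝ)/2) ≤ Cf := by
    have h5 : Q ^ ((e : ℝ)/2) * Q ^ ((e : ℝ)/2) ≤ Cf * Q ^ ((e : ℝ)/2) := by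
      rw [← hQe]
      calc Q ^ (e : ℕ) ≤ ((sphereFin F (e+1)).card : ℝ) := by
            rw [hQ]; exact_mod_cast hinj
        _ ≤ Cf * Q ^ ((e : ℝ)/2) := hub
    exact le_of_mul_le_mul_right h5 hX0
  calc Q = Q ^ (1 : ℝ) := (Real.rpow_one Q).symm
    _ ≤ Q ^ ((e : ℝ)/2) := by
        apply Real.rpow_le_rpow_of_exponent_le hQ1
        have h6 : (2 : ℝ) ≤ (e : ℝ) := by exact_mod_cast he2
        linarith
    _ ≤ Cf := hXCf

lemma exponent_ineqs (n e : ℕ) (hn : 2 ≤ n) (he : n ≤ e) :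
    ((n-1) + e*(n-1) + (e-1) ≤ e*n + (e-2)) ∧
    ((n-1) + e*(n-2) + e ≤ e*n + (e-2)) ∧
    ((n-2) + e*(n-1) + e ≤ e*n + (e-2)) := by
  obtain ⟨m, hm⟩ : ∃ m, n = m + 2 := ⟨n - 2, by omega⟩
  obtain ⟨c, hc⟩ : ∃ c, e = m + 2 + c := ⟨e - n, by omega⟩
  have hn1 : n - 1 = m + 1 := by omega
  have hn2 : n - 2 = m := by omega
  have he1 : e - 1 = m + 1 + c := by omega
  have he2' : e - 2 = m + c := by omega
  have hme : m + 2 ≤ e := by omega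
  have hee : 2 ≤ e := by omega
  refine ⟨?_, ?_, ?_⟩
  · rw [hn1, he1, he2', hm]
    have h : e * (m + 2) = e * (m + 1) + e := by ring
    rw [h]; linarith
  · rw [hn1, hn2, he2', hm]
    have h : e * (m + 2) = e * m + 2 * e := by ring
    rw [h]; linarith
  · rw [hn1, hn2, he2', hm]
    have h : e * (m + 2) = e * (m + 1) + e := by ring
    rw [h]; linarith

set_option maxHeartbeats 2000000 in
lemma per_i_bound {n e : ℕ} (hn : 2 ≤ n) (hne : n ≤ e)
    {F : Type} [Field F] [Fintype F] [DecidableEq F]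
    (χ : AddChar F ℂ) (hχ : χ ≠ 1) {Cf : ℝ} (hCf : 0 < Cf)
    (hF : ∀ m : Fin (e+1) → F, m ≠ 0 →
        ‖∑ x ∈ sphereFin F (e+1), χ (∑ k, x k * m k)‖ ≤
          Cf * (Fintype.card F : ℝ) ^ (((((e+1 : ℕ)) : ℝ) - 1) / 2))
    (hS : ((sphereFin F (e+1)).card : ℝ) ≤ 2 * (Fintype.card F : ℝ) ^ e)
    (hchar : ringChar F ≠ 2)
    {i : Fin (n+1)} (hi0 : i ≠ 0) :
    ((∑ a ∈ Aset n F i, (Tia n (e+1) i a).card : ℕ) : ℝ) ≤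
      (2 ^ n * (Cf + 5)) * (Fintype.card F : ℝ) ^ (e*n + (e-2)) := by
  classical
  have he2 : 2 ≤ e := le_trans hn hne
  have hnn1 : n - 2 + 1 = n - 1 := by omega
  have hee1 : e - 1 + 1 = e := by omega
  have hee2 : (1:ℕ) ≤ e := by omega
  have hnn2 : n - 1 + 1 = n := by omega
  have hnsub : n - 1 ≤ n := by omega
  set S := sphereFin F (e+1) with hSdef
  set Q : ℝ := ((Fintype.card F : ℕ) : ℝ) with hQdef
  have hq1 : 1 < Fintype.card F := Fintype.one_lt_card
  have hQ1 : (1 : ℝ) ≤ Q := by rw [hQdef]; exact_mod_cast hq1.le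
  have hQ0 : (0 : ℝ) ≤ Q := le_trans zero_le_one hQ1
  have hQpos : (0 : ℝ) < Q := lt_of_lt_of_le one_pos hQ1
  have hS0 : (0 : ℝ) ≤ ((S.card : ℕ) : ℝ) := Nat.cast_nonneg _
  have h2F : (2 : F) ≠ 0 := Ring.two_ne_zero hchar
  have hCf0 : (0 : ℝ) ≤ Cf := hCf.le
  -- individual K bound in the nondegenerate case
  have hKbound : ∀ (a : Fin (n+1) → F) (h : Fin (n+1) → (Fin (e+1) → F)),
      lamA n i a ≠ 0 → uuA n (e+1) i a h ≠ 0 →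
      ((Kset n (e+1) i a h).card : ℝ) ≤ (2 + Cf) * Q ^ (e-1) := by
    intro a h hlam hu
    have hm : ((2 * lamA n i a) • uuA n (e+1) i a h) ≠ 0 := by
      intro hzero
      have h2l : (2 * lamA n i a) ≠ 0 := mul_ne_zero h2F hlam
      exact hu ((smul_eq_zero.mp hzero).resolve_left h2l)
    have hcard := Finset.card_le_card
      (kset_subset_hyperplane (F := F) (d := e+1) (lamA n i a) (uuA n (e+1) i a h))
    have hhb := hyperplane_bound F (e+1) χ hχ Cf hCf0 hF
      ((2 * lamA n i a) • uuA n (e+1) i a h) hm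
      (1 - (lamA n i a) ^ 2 - ∑ k, (uuA n (e+1) i a h k) ^ 2)
    have hr1 : ((S.card : ℕ) : ℝ) / Q ≤ 2 * Q ^ (e-1) := by
      rw [div_le_iff₀ hQpos]
      calc ((S.card : ℕ) : ℝ) ≤ 2 * Q ^ e := hS
        _ = 2 * Q ^ (e-1) * Q := by
            rw [mul_assoc, ← pow_succ, hee1]
    have hr2 : Q ^ (((((e+1 : ℕ)) : ℝ) - 1) / 2) ≤ Q ^ (e-1) := by
      rw [← Real.rpow_natCast Q (e-1)]
      apply Real.rpow_le_rpow_of_exponent_le hQ1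
      have hcast : (((e-1 : ℕ)) : ℝ) = (e : ℝ) - 1 := by
        rw [Nat.cast_sub hee2, Nat.cast_one]
      rw [hcast]
      push_cast
      have h6 : (2 : ℝ) ≤ (e : ℝ) := by exact_mod_cast he2
      linarith
    calc ((Kset n (e+1) i a h).card : ℝ)
        ≤ ((((sphereFin F (e+1)).filter (fun x =>
            ∑ k, x k * ((2 * lamA n i a) • uuA n (e+1) i a h) k =
              1 - (lamA n i a) ^ 2 - ∑ k, (uuA n (e+1) i a h k) ^ 2)).card : ℕ) : ℝ) := by
          exact_mod_cast hcard
      _ ≤ ((S.card : ℕ) : ℝ) / Q + Cf * Q ^ (((((e+1 : ℕ)) : ℝ) - 1) / 2) := hhb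
      _ ≤ 2 * Q ^ (e-1) + Cf * Q ^ (e-1) :=
          add_le_add hr1 (mul_le_mul_of_nonneg_left hr2 hCf0)
      _ = (2 + Cf) * Q ^ (e-1) := by ring
  -- trivial K bound
  have hKtriv : ∀ (a : Fin (n+1) → F) (h : Fin (n+1) → (Fin (e+1) → F)),
      ((Kset n (e+1) i a h).card : ℝ) ≤ ((S.card : ℕ) : ℝ) := by
    intro a h
    exact_mod_cast Finset.card_le_card (Finset.filter_subset _ _)
  -- cast of card of Wset
  have hWcard : (((Wset n F (e+1) i).card : ℕ) : ℝ) = ((S.card : ℕ) : ℝ) ^ (n-1) := by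
    rw [card_Wset hi0]; push_cast; ring
  -- sum over h for a with lam ≠ 0
  have hKa1 : ∀ a ∈ Aset n F i, lamA n i a ≠ 0 →
      ((∑ h ∈ Wset n F (e+1) i, (Kset n (e+1) i a h).card : ℕ) : ℝ) ≤
        ((S.card : ℕ) : ℝ) ^ (n-1) * ((2 + Cf) * Q ^ (e-1))
          + ((S.card : ℕ) : ℝ) ^ (n-2) * ((S.card : ℕ) : ℝ) := by
    intro a ha hlam
    push_cast
    rw [← Finset.sum_filter_add_sum_filter_not (Wset n F (e+1) i)
      (fun h => uuA n (e+1) i a h = 0) (fun h => ((Kset n (e+1) i a h).card : ℝ))]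
    have hb1 : ∑ h ∈ (Wset n F (e+1) i).filter (fun h => uuA n (e+1) i a h = 0),
        ((Kset n (e+1) i a h).card : ℝ) ≤ ((S.card : ℕ) : ℝ) ^ (n-2) * ((S.card : ℕ) : ℝ) := by
      calc ∑ h ∈ (Wset n F (e+1) i).filter (fun h => uuA n (e+1) i a h = 0),
          ((Kset n (e+1) i a h).card : ℝ)
          ≤ ∑ _h ∈ (Wset n F (e+1) i).filter (fun h => uuA n (e+1) i a h = 0),
            ((S.card : ℕ) : ℝ) := Finset.sum_le_sum (fun h _ => hKtriv a h)
        _ = (((Wset n F (e+1) i).filter (fun h => uuA n (e+1) i a h = 0)).card : ℝ)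
            * ((S.card : ℕ) : ℝ) := by rw [Finset.sum_const, nsmul_eq_mul]
        _ ≤ ((S.card : ℕ) : ℝ) ^ (n-2) * ((S.card : ℕ) : ℝ) := by
            apply mul_le_mul_of_nonneg_right _ hS0
            have := count_u_zero (d := e+1) hn hi0 ha
            calc (((Wset n F (e+1) i).filter (fun h => uuA n (e+1) i a h = 0)).card : ℝ)
                ≤ (((S.card ^ (n-2) : ℕ)) : ℝ) := by exact_mod_cast this
              _ = ((S.card : ℕ) : ℝ) ^ (n-2) := by push_cast; ring
    have hb2 : ∑ h ∈ (Wset n F (e+1) i).filter (fun h => ¬ uuA n (e+1) i a h = 0),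
        ((Kset n (e+1) i a h).card : ℝ) ≤ ((S.card : ℕ) : ℝ) ^ (n-1) * ((2 + Cf) * Q ^ (e-1)) := by
      have hB0 : (0:ℝ) ≤ (2 + Cf) * Q ^ (e-1) := by positivity
      calc ∑ h ∈ (Wset n F (e+1) i).filter (fun h => ¬ uuA n (e+1) i a h = 0),
          ((Kset n (e+1) i a h).card : ℝ)
          ≤ ∑ h ∈ (Wset n F (e+1) i).filter (fun h => ¬ uuA n (e+1) i a h = 0),
            ((2 + Cf) * Q ^ (e-1)) := by
            refine Finset.sum_le_sum (fun h hh => ?_)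
            exact hKbound a h hlam (Finset.mem_filter.mp hh).2
        _ = (((Wset n F (e+1) i).filter (fun h => ¬ uuA n (e+1) i a h = 0)).card : ℝ)
            * ((2 + Cf) * Q ^ (e-1)) := by rw [Finset.sum_const, nsmul_eq_mul]
        _ ≤ ((S.card : ℕ) : ℝ) ^ (n-1) * ((2 + Cf) * Q ^ (e-1)) := by
            apply mul_le_mul_of_nonneg_right _ hB0
            rw [← hWcard]
            exact_mod_cast Finset.card_le_card (Finset.filter_subset _ _)
    linarith
  -- sum over h for arbitrary a
  have hKa0 : ∀ a : Fin (n+1) → F,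
      ((∑ h ∈ Wset n F (e+1) i, (Kset n (e+1) i a h).card : ℕ) : ℝ) ≤
        ((S.card : ℕ) : ℝ) ^ (n-1) * ((S.card : ℕ) : ℝ) := by
    intro a
    push_cast
    calc ∑ h ∈ Wset n F (e+1) i, ((Kset n (e+1) i a h).card : ℝ)
        ≤ ∑ _h ∈ Wset n F (e+1) i, ((S.card : ℕ) : ℝ) :=
          Finset.sum_le_sum (fun h _ => hKtriv a h)
      _ = (((Wset n F (e+1) i).card : ℕ) : ℝ) * ((S.card : ℕ) : ℝ) := by
          rw [Finset.sum_const, nsmul_eq_mul]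
      _ = ((S.card : ℕ) : ℝ) ^ (n-1) * ((S.card : ℕ) : ℝ) := by rw [hWcard]
  -- step 2 cast
  have hstep2a : ((∑ a ∈ Aset n F i, (Tia n (e+1) i a).card : ℕ) : ℝ) ≤
      ∑ a ∈ Aset n F i, ((∑ h ∈ Wset n F (e+1) i, (Kset n (e+1) i a h).card : ℕ) : ℝ) := by
    push_cast
    refine Finset.sum_le_sum (fun a _ => ?_)
    exact_mod_cast step2 i a
  -- split the a-sum
  have hAsplit := Finset.sum_filter_add_sum_filter_not (Aset n F i)
    (fun a => lamA n i a = 0)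
    (fun a => ((∑ h ∈ Wset n F (e+1) i, (Kset n (e+1) i a h).card : ℕ) : ℝ))
  have hA0 : ∑ a ∈ (Aset n F i).filter (fun a => lamA n i a = 0),
      ((∑ h ∈ Wset n F (e+1) i, (Kset n (e+1) i a h).card : ℕ) : ℝ) ≤
      Q ^ (n-2) * (((S.card : ℕ) : ℝ) ^ (n-1) * ((S.card : ℕ) : ℝ)) := by
    have hB0 : (0:ℝ) ≤ ((S.card : ℕ) : ℝ) ^ (n-1) * ((S.card : ℕ) : ℝ) := by positivity
    calc ∑ a ∈ (Aset n F i).filter (fun a => lamA n i a = 0),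
        ((∑ h ∈ Wset n F (e+1) i, (Kset n (e+1) i a h).card : ℕ) : ℝ)
        ≤ ∑ _a ∈ (Aset n F i).filter (fun a => lamA n i a = 0),
          (((S.card : ℕ) : ℝ) ^ (n-1) * ((S.card : ℕ) : ℝ)) :=
          Finset.sum_le_sum (fun a _ => hKa0 a)
      _ = (((Aset n F i).filter (fun a => lamA n i a = 0)).card : ℝ)
          * (((S.card : ℕ) : ℝ) ^ (n-1) * ((S.card : ℕ) : ℝ)) := by
          rw [Finset.sum_const, nsmul_eq_mul]
      _ ≤ Q ^ (n-2) * (((S.card : ℕ) : ℝ) ^ (n-1) * ((S.card : ℕ) : ℝ)) := by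
          apply mul_le_mul_of_nonneg_right _ hB0
          have := count_lam_zero (F := F) hn hi0
          calc (((Aset n F i).filter (fun a => lamA n i a = 0)).card : ℝ)
              ≤ ((Fintype.card F ^ (n-2) : ℕ) : ℝ) := by exact_mod_cast this
            _ = Q ^ (n-2) := by rw [hQdef]; push_cast; ring
  have hA1 : ∑ a ∈ (Aset n F i).filter (fun a => ¬ lamA n i a = 0),
      ((∑ h ∈ Wset n F (e+1) i, (Kset n (e+1) i a h).card : ℕ) : ℝ) ≤
      Q ^ (n-1) * (((S.card : ℕ) : ℝ) ^ (n-1) * ((2 + Cf) * Q ^ (e-1))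
        + ((S.card : ℕ) : ℝ) ^ (n-2) * ((S.card : ℕ) : ℝ)) := by
    have hB0 : (0:ℝ) ≤ ((S.card : ℕ) : ℝ) ^ (n-1) * ((2 + Cf) * Q ^ (e-1))
        + ((S.card : ℕ) : ℝ) ^ (n-2) * ((S.card : ℕ) : ℝ) := by positivity
    calc ∑ a ∈ (Aset n F i).filter (fun a => ¬ lamA n i a = 0),
        ((∑ h ∈ Wset n F (e+1) i, (Kset n (e+1) i a h).card : ℕ) : ℝ)
        ≤ ∑ a ∈ (Aset n F i).filter (fun a => ¬ lamA n i a = 0),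
          (((S.card : ℕ) : ℝ) ^ (n-1) * ((2 + Cf) * Q ^ (e-1))
            + ((S.card : ℕ) : ℝ) ^ (n-2) * ((S.card : ℕ) : ℝ)) := by
          refine Finset.sum_le_sum (fun a ha => ?_)
          have hmem := Finset.mem_filter.mp ha
          exact hKa1 a hmem.1 hmem.2
      _ = (((Aset n F i).filter (fun a => ¬ lamA n i a = 0)).card : ℝ)
          * (((S.card : ℕ) : ℝ) ^ (n-1) * ((2 + Cf) * Q ^ (e-1))
            + ((S.card : ℕ) : ℝ) ^ (n-2) * ((S.card : ℕ) : ℝ)) := by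
          rw [Finset.sum_const, nsmul_eq_mul]
      _ ≤ Q ^ (n-1) * (((S.card : ℕ) : ℝ) ^ (n-1) * ((2 + Cf) * Q ^ (e-1))
            + ((S.card : ℕ) : ℝ) ^ (n-2) * ((S.card : ℕ) : ℝ)) := by
          apply mul_le_mul_of_nonneg_right _ hB0
          calc (((Aset n F i).filter (fun a => ¬ lamA n i a = 0)).card : ℝ)
              ≤ ((Aset n F i).card : ℝ) := by
                exact_mod_cast Finset.card_le_card (Finset.filter_subset _ _)
            _ = (((Fintype.card F - 1) ^ (n-1) : ℕ) : ℝ) := by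
                rw [card_Aset hi0]
            _ ≤ Q ^ (n-1) := by
                rw [hQdef]
                push_cast
                apply pow_le_pow_left₀ (by positivity)
                exact_mod_cast Nat.sub_le _ _
  -- powers of sphere size
  have hS1 : ((S.card : ℕ) : ℝ) ^ (n-1) ≤ 2 ^ (n-1) * Q ^ (e*(n-1)) := by
    calc ((S.card : ℕ) : ℝ) ^ (n-1) ≤ (2 * Q ^ e) ^ (n-1) := pow_le_pow_left₀ hS0 hS _
      _ = 2 ^ (n-1) * Q ^ (e*(n-1)) := by rw [mul_pow, ← pow_mul]
  have hS2 : ((S.card : ℕ) : ℝ) ^ (n-2) ≤ 2 ^ (n-2) * Q ^ (e*(n-2)) := by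
    calc ((S.card : ℕ) : ℝ) ^ (n-2) ≤ (2 * Q ^ e) ^ (n-2) := pow_le_pow_left₀ hS0 hS _
      _ = 2 ^ (n-2) * Q ^ (e*(n-2)) := by rw [mul_pow, ← pow_mul]
  obtain ⟨i1, i2, i3⟩ := exponent_ineqs n e hn hne
  set E := e*n + (e-2) with hEdef
  have hQE0 : (0:ℝ) ≤ Q ^ E := by positivity
  -- three term bounds
  have hT1 : Q ^ (n-1) * ((2 ^ (n-1) * Q ^ (e*(n-1))) * ((2 + Cf) * Q ^ (e-1))) ≤
      (2 ^ (n-1) * (2 + Cf)) * Q ^ E := by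
    have heq : Q ^ (n-1) * ((2 ^ (n-1) * Q ^ (e*(n-1))) * ((2 + Cf) * Q ^ (e-1)))
        = (2 ^ (n-1) * (2 + Cf)) * Q ^ ((n-1) + e*(n-1) + (e-1)) := by
      rw [pow_add, pow_add]; ring
    rw [heq]
    apply mul_le_mul_of_nonneg_left (pow_le_pow_right₀ hQ1 i1) (by positivity)
  have hT2 : Q ^ (n-1) * ((2 ^ (n-2) * Q ^ (e*(n-2))) * (2 * Q ^ e)) ≤
      (2 ^ (n-1)) * Q ^ E := by
    have heq : Q ^ (n-1) * ((2 ^ (n-2) * Q ^ (e*(n-2))) * (2 * Q ^ e))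
        = (2 ^ (n-2) * 2) * Q ^ ((n-1) + e*(n-2) + e) := by
      rw [pow_add, pow_add]; ring
    rw [heq]
    have h22 : (2:ℝ) ^ (n-2) * 2 = 2 ^ (n-1) := by
      rw [← pow_succ, hnn1]
    rw [h22]
    apply mul_le_mul_of_nonneg_left (pow_le_pow_right₀ hQ1 i2) (by positivity)
  have hT3 : Q ^ (n-2) * ((2 ^ (n-1) * Q ^ (e*(n-1))) * (2 * Q ^ e)) ≤
      (2 ^ n) * Q ^ E := by
    have heq : Q ^ (n-2) * ((2 ^ (n-1) * Q ^ (e*(n-1))) * (2 * Q ^ e))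
        = (2 ^ (n-1) * 2) * Q ^ ((n-2) + e*(n-1) + e) := by
      rw [pow_add, pow_add]; ring
    rw [heq]
    have h22 : (2:ℝ) ^ (n-1) * 2 = 2 ^ n := by
      rw [← pow_succ, hnn2]
    rw [h22]
    apply mul_le_mul_of_nonneg_left (pow_le_pow_right₀ hQ1 i3) (by positivity)
  -- put everything together
  have hmid1 : Q ^ (n-1) * (((S.card : ℕ) : ℝ) ^ (n-1) * ((2 + Cf) * Q ^ (e-1))
      + ((S.card : ℕ) : ℝ) ^ (n-2) * ((S.card : ℕ) : ℝ)) ≤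
      (2 ^ (n-1) * (2 + Cf)) * Q ^ E + (2 ^ (n-1)) * Q ^ E := by
    have hQn10 : (0:ℝ) ≤ Q ^ (n-1) := by positivity
    have hstep : ((S.card : ℕ) : ℝ) ^ (n-1) * ((2 + Cf) * Q ^ (e-1))
        + ((S.card : ℕ) : ℝ) ^ (n-2) * ((S.card : ℕ) : ℝ)
        ≤ (2 ^ (n-1) * Q ^ (e*(n-1))) * ((2 + Cf) * Q ^ (e-1))
          + (2 ^ (n-2) * Q ^ (e*(n-2))) * (2 * Q ^ e) := by
      apply add_le_add
      · apply mul_le_mul_of_nonneg_right hS1 (by positivity)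
      · apply mul_le_mul hS2 hS (by positivity) (by positivity)
    calc Q ^ (n-1) * (((S.card : ℕ) : ℝ) ^ (n-1) * ((2 + Cf) * Q ^ (e-1))
        + ((S.card : ℕ) : ℝ) ^ (n-2) * ((S.card : ℕ) : ℝ))
        ≤ Q ^ (n-1) * ((2 ^ (n-1) * Q ^ (e*(n-1))) * ((2 + Cf) * Q ^ (e-1))
          + (2 ^ (n-2) * Q ^ (e*(n-2))) * (2 * Q ^ e)) :=
          mul_le_mul_of_nonneg_left hstep hQn10
      _ = Q ^ (n-1) * ((2 ^ (n-1) * Q ^ (e*(n-1))) * ((2 + Cf) * Q ^ (e-1)))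
          + Q ^ (n-1) * ((2 ^ (n-2) * Q ^ (e*(n-2))) * (2 * Q ^ e)) := by ring
      _ ≤ (2 ^ (n-1) * (2 + Cf)) * Q ^ E + (2 ^ (n-1)) * Q ^ E := add_le_add hT1 hT2
  have hmid2 : Q ^ (n-2) * (((S.card : ℕ) : ℝ) ^ (n-1) * ((S.card : ℕ) : ℝ)) ≤
      (2 ^ n) * Q ^ E := by
    have hQn20 : (0:ℝ) ≤ Q ^ (n-2) := by positivity
    have hstep : ((S.card : ℕ) : ℝ) ^ (n-1) * ((S.card : ℕ) : ℝ)
        ≤ (2 ^ (n-1) * Q ^ (e*(n-1))) * (2 * Q ^ e) := by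
      apply mul_le_mul hS1 hS hS0 (by positivity)
    calc Q ^ (n-2) * (((S.card : ℕ) : ℝ) ^ (n-1) * ((S.card : ℕ) : ℝ))
        ≤ Q ^ (n-2) * ((2 ^ (n-1) * Q ^ (e*(n-1))) * (2 * Q ^ e)) :=
          mul_le_mul_of_nonneg_left hstep hQn20
      _ ≤ (2 ^ n) * Q ^ E := hT3
  -- final combination
  have hfinal : ((∑ a ∈ Aset n F i, (Tia n (e+1) i a).card : ℕ) : ℝ) ≤
      ((2 ^ (n-1) * (2 + Cf)) + 2 ^ (n-1) + 2 ^ n) * Q ^ E := by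
    calc ((∑ a ∈ Aset n F i, (Tia n (e+1) i a).card : ℕ) : ℝ)
        ≤ ∑ a ∈ Aset n F i, ((∑ h ∈ Wset n F (e+1) i, (Kset n (e+1) i a h).card : ℕ) : ℝ) :=
          hstep2a
      _ = ∑ a ∈ (Aset n F i).filter (fun a => lamA n i a = 0),
            ((∑ h ∈ Wset n F (e+1) i, (Kset n (e+1) i a h).card : ℕ) : ℝ)
          + ∑ a ∈ (Aset n F i).filter (fun a => ¬ lamA n i a = 0),
            ((∑ h ∈ Wset n F (e+1) i, (Kset n (e+1) i a h).card : ℕ) : ℝ) := hAsplit.symm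
      _ ≤ Q ^ (n-2) * (((S.card : ℕ) : ℝ) ^ (n-1) * ((S.card : ℕ) : ℝ))
          + Q ^ (n-1) * (((S.card : ℕ) : ℝ) ^ (n-1) * ((2 + Cf) * Q ^ (e-1))
            + ((S.card : ℕ) : ℝ) ^ (n-2) * ((S.card : ℕ) : ℝ)) := add_le_add hA0 hA1
      _ ≤ (2 ^ n) * Q ^ E + ((2 ^ (n-1) * (2 + Cf)) * Q ^ E + (2 ^ (n-1)) * Q ^ E) :=
          add_le_add hmid2 hmid1
      _ = ((2 ^ (n-1) * (2 + Cf)) + 2 ^ (n-1) + 2 ^ n) * Q ^ E := by ring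
  refine hfinal.trans ?_
  apply mul_le_mul_of_nonneg_right _ hQE0
  have h2n : (2:ℝ) ^ (n-1) ≤ 2 ^ n := pow_le_pow_right₀ one_le_two hnsub
  have h2n0 : (0:ℝ) < 2 ^ n := by positivity
  nlinarith [h2n, h2n0, hCf]

set_option maxHeartbeats 2000000 in
/-- For `d > n ≥ 2`, the number `L` of tuples `(v_0,...,v_n) ∈ (S^{d−1})^{n+1}` such that
for some `1 ≤ i ≤ n`, `v_i − v_0 = ∑_{j≠i} a_j (v_j − v_0)` with all `a_j ∈ F_q^*`,
satisfies `L ≤ C(n) q^{(d−1)(n+1)−2}` (assuming the standard sphere size and Fourier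
decay bounds). -/
theorem stmt_9 (n : ℕ) (hn : 2 ≤ n) (Cf : ℝ) (hCf : 0 < Cf) :
    ∃ C : ℝ, 0 < C ∧ ∀ d : ℕ, n < d →
      ∀ (F : Type) [Field F] [Fintype F] [DecidableEq F],
      ∀ (χ : AddChar F ℂ), χ ≠ 1 →
      (∀ m : Fin d → F, m ≠ 0 →
        ‖∑ x ∈ sphereFin F d, χ (∑ i, x i * m i)‖ ≤
          Cf * (Fintype.card F : ℝ) ^ (((d : ℝ) - 1) / 2)) →
      ((sphereFin F d).card : ℝ) ≤ 2 * (Fintype.card F : ℝ) ^ (d - 1) →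
      (Set.ncard {v : Fin (n + 1) → (Fin d → F) |
          (∀ j, v j ∈ sphereFin F d) ∧
          ∃ i : Fin (n + 1), i ≠ 0 ∧ ∃ a : Fin (n + 1) → F,
            (∀ j : Fin (n + 1), j ≠ 0 → j ≠ i → a j ≠ 0) ∧
            v i - v 0 = ∑ j ∈ (Finset.univ.erase 0).erase i, a j • (v j - v 0)} : ℝ) ≤
        C * (Fintype.card F : ℝ) ^ ((d - 1) * (n + 1) - 2) := by
  classical
  refine ⟨(n : ℝ) * (2 ^ n * (Cf + 5)) + 2 ^ (n+1) * Cf ^ 2 + 1, by positivity, ?_⟩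
  intro d hd F _ _ _ χ hχ hF hS
  obtain ⟨e, rfl⟩ : ∃ e, d = e + 1 := ⟨d - 1, by omega⟩
  have hne : n ≤ e := by omega
  have he2 : 2 ≤ e := by omega
  have hq1 : 1 < Fintype.card F := Fintype.one_lt_card
  have hQ1 : (1 : ℝ) ≤ (Fintype.card F : ℝ) := by exact_mod_cast hq1.le
  have hQ0 : (0 : ℝ) ≤ (Fintype.card F : ℝ) := le_trans zero_le_one hQ1
  -- clean up hypotheses
  have hd1 : e + 1 - 1 = e := by omega
  rw [hd1] at hS
  -- exponent identity
  have hE : (e + 1 - 1) * (n + 1) - 2 = e * n + (e - 2) := by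
    have h2 : e * (n + 1) = e * n + e := by ring
    rw [hd1, h2, Nat.add_sub_assoc he2]
  have hQE0 : (0 : ℝ) ≤ (Fintype.card F : ℝ) ^ (e * n + (e - 2)) := by positivity
  -- the set as a finset
  set T : Finset (Fin (n+1) → (Fin (e+1) → F)) := Finset.univ.filter (fun v =>
    (∀ j, v j ∈ sphereFin F (e+1)) ∧ ∃ i : Fin (n + 1), i ≠ 0 ∧ ∃ a : Fin (n + 1) → F,
      (∀ j : Fin (n + 1), j ≠ 0 → j ≠ i → a j ≠ 0) ∧
      v i - v 0 = ∑ j ∈ (Finset.univ.erase 0).erase i, a j • (v j - v 0)) with hTdef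
  have hset : {v : Fin (n + 1) → (Fin (e+1) → F) |
      (∀ j, v j ∈ sphereFin F (e+1)) ∧
      ∃ i : Fin (n + 1), i ≠ 0 ∧ ∃ a : Fin (n + 1) → F,
        (∀ j : Fin (n + 1), j ≠ 0 → j ≠ i → a j ≠ 0) ∧
        v i - v 0 = ∑ j ∈ (Finset.univ.erase 0).erase i, a j • (v j - v 0)} = ↑T := by
    rw [hTdef]
    ext v
    simp only [Finset.coe_filter, Finset.mem_univ, true_and, Set.mem_setOf_eq]
  rw [hset, Set.ncard_coe_finset, hE]
  by_cases hchar : ringChar F = 2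
  · -- characteristic 2 : trivial bound suffices
    have hQCf : ((Fintype.card F : ℕ) : ℝ) ≤ Cf := char2_q_le he2 hchar χ hF
    have hTsub : T ⊆ Fintype.piFinset (fun _ : Fin (n+1) => sphereFin F (e+1)) := by
      intro v hv
      rw [hTdef, Finset.mem_filter] at hv
      rw [Fintype.mem_piFinset]
      exact fun j => hv.2.1 j
    have hTcard : (T.card : ℝ) ≤ ((sphereFin F (e+1)).card : ℝ) ^ (n+1) := by
      have h1 := Finset.card_le_card hTsub
      have h2 : (Fintype.piFinset (fun _ : Fin (n+1) => sphereFin F (e+1))).card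
          = (sphereFin F (e+1)).card ^ (n+1) := by
        rw [Fintype.card_piFinset]
        simp
      rw [h2] at h1
      exact_mod_cast le_trans h1 (le_refl _)
    have hEe : e * (n + 1) = 2 + (e * n + (e - 2)) := by
      have h2 : e * (n + 1) = e * n + e := by ring
      rw [h2]
      obtain ⟨M, hM⟩ : ∃ M, e * n = M := ⟨_, rfl⟩
      rw [hM]
      omega
    have hS0 : (0 : ℝ) ≤ ((sphereFin F (e+1)).card : ℝ) := Nat.cast_nonneg _
    calc (T.card : ℝ) ≤ ((sphereFin F (e+1)).card : ℝ) ^ (n+1) := hTcard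
      _ ≤ (2 * (Fintype.card F : ℝ) ^ e) ^ (n+1) := pow_le_pow_left₀ hS0 hS _
      _ = 2 ^ (n+1) * (Fintype.card F : ℝ) ^ (e * (n+1)) := by rw [mul_pow, ← pow_mul]
      _ = 2 ^ (n+1) * ((Fintype.card F : ℝ) ^ 2 * (Fintype.card F : ℝ) ^ (e * n + (e - 2))) := by
          rw [hEe, pow_add ((Fintype.card F : ℝ)) 2 (e*n+(e-2))]
      _ ≤ 2 ^ (n+1) * (Cf ^ 2 * (Fintype.card F : ℝ) ^ (e * n + (e - 2))) := by
          have h3 : (Fintype.card F : ℝ) ^ 2 ≤ Cf ^ 2 := pow_le_pow_left₀ hQ0 hQCf 2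
          have h4 : (0:ℝ) ≤ (2:ℝ) ^ (n+1) := by positivity
          exact mul_le_mul_of_nonneg_left (mul_le_mul_of_nonneg_right h3 hQE0) h4
      _ ≤ ((n : ℝ) * (2 ^ n * (Cf + 5)) + 2 ^ (n+1) * Cf ^ 2 + 1)
            * (Fintype.card F : ℝ) ^ (e * n + (e - 2)) := by
          have h5 : (2:ℝ) ^ (n+1) * Cf ^ 2
              ≤ (n : ℝ) * (2 ^ n * (Cf + 5)) + 2 ^ (n+1) * Cf ^ 2 + 1 := by
            have h6 : (0:ℝ) ≤ (n : ℝ) * (2 ^ n * (Cf + 5)) := by positivity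
            linarith
          calc (2:ℝ) ^ (n+1) * (Cf ^ 2 * (Fintype.card F : ℝ) ^ (e * n + (e - 2)))
              = ((2:ℝ) ^ (n+1) * Cf ^ 2) * (Fintype.card F : ℝ) ^ (e * n + (e - 2)) := by ring
            _ ≤ _ := mul_le_mul_of_nonneg_right h5 hQE0
  · -- characteristic ≠ 2
    have hsub : T ⊆ (Finset.univ.erase (0 : Fin (n+1))).biUnion
        (fun i => (Aset n F i).biUnion (fun a => Tia n (e+1) i a)) := by
      intro v hv
      rw [hTdef, Finset.mem_filter] at hv
      obtain ⟨-, hvS, i, hi, a, haj, heqv⟩ := hv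
      rw [Finset.mem_biUnion]
      refine ⟨i, Finset.mem_erase.mpr ⟨hi, Finset.mem_univ _⟩, ?_⟩
      rw [Finset.mem_biUnion]
      refine ⟨fun j => if j ∈ Jset n i then a j else 0, ?_, ?_⟩
      · rw [Aset, Fintype.mem_piFinset]
        intro j
        by_cases hj : j ∈ Jset n i
        · rw [if_pos hj, if_pos hj]
          exact Finset.mem_erase.mpr
            ⟨haj j (mem_Jset.mp hj).2 (mem_Jset.mp hj).1, Finset.mem_univ _⟩
        · rw [if_neg hj, if_neg hj]
          exact Finset.mem_singleton_self 0
      · rw [Tia, Finset.mem_filter]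
        refine ⟨Finset.mem_univ _, hvS, ?_⟩
        rw [heqv]
        exact Finset.sum_congr rfl (fun j hj => by simp [hj])
    have hstep1 : T.card ≤ ∑ i ∈ Finset.univ.erase (0 : Fin (n+1)),
        ∑ a ∈ Aset n F i, (Tia n (e+1) i a).card :=
      le_trans (Finset.card_le_card hsub)
        (le_trans Finset.card_biUnion_le
          (Finset.sum_le_sum fun i _ => Finset.card_biUnion_le))
    have hmain : ∀ i ∈ Finset.univ.erase (0 : Fin (n+1)),
        ((∑ a ∈ Aset n F i, (Tia n (e+1) i a).card : ℕ) : ℝ) ≤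
          (2 ^ n * (Cf + 5)) * (Fintype.card F : ℝ) ^ (e * n + (e - 2)) := by
      intro i hi
      exact per_i_bound hn hne χ hχ hCf hF hS hchar (Finset.mem_erase.mp hi).1
    have hcount : ((Finset.univ.erase (0 : Fin (n+1))).card : ℝ) = (n : ℝ) := by
      rw [Finset.card_erase_of_mem (Finset.mem_univ _), Finset.card_univ, Fintype.card_fin]
      push_cast
      ring
    calc (T.card : ℝ)
        ≤ ((∑ i ∈ Finset.univ.erase (0 : Fin (n+1)),
            ∑ a ∈ Aset n F i, (Tia n (e+1) i a).card : ℕ) : ℝ) := by exact_mod_cast hstep1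
      _ = ∑ i ∈ Finset.univ.erase (0 : Fin (n+1)),
            ((∑ a ∈ Aset n F i, (Tia n (e+1) i a).card : ℕ) : ℝ) := by push_cast; ring
      _ ≤ ∑ _i ∈ Finset.univ.erase (0 : Fin (n+1)),
            (2 ^ n * (Cf + 5)) * (Fintype.card F : ℝ) ^ (e * n + (e - 2)) :=
          Finset.sum_le_sum hmain
      _ = ((Finset.univ.erase (0 : Fin (n+1))).card : ℝ)
            * ((2 ^ n * (Cf + 5)) * (Fintype.card F : ℝ) ^ (e * n + (e - 2))) := by
          rw [Finset.sum_const, nsmul_eq_mul]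
      _ = (n : ℝ) * (2 ^ n * (Cf + 5)) * (Fintype.card F : ℝ) ^ (e * n + (e - 2)) := by
          rw [hcount]; ring
      _ ≤ ((n : ℝ) * (2 ^ n * (Cf + 5)) + 2 ^ (n+1) * Cf ^ 2 + 1)
            * (Fintype.card F : ℝ) ^ (e * n + (e - 2)) := by
          apply mul_le_mul_of_nonneg_right _ hQE0
          have h7 : (0:ℝ) ≤ 2 ^ (n+1) * Cf ^ 2 := by positivity
          linarith
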